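/- arXiv:0905.0537 — 2 statements merged into one kernel-verified Lean document; each statement's English description precedes it below -/
import Mathlib

section
/- Let M be a ℤ-module equipped with a symmetric ℤ-bilinear form B. Let Ẑ, Z̃ ∈ M, let E_1, …, E_s ∈ M, and let c_1, …, c_s be integers such that Ẑ − Z̃ = Σ_{j=1}^s c_j E_j. Suppose that for every j: (i) 2c_j = B(E_j, Z̃) − B(E_j, Ẑ), (ii) B(E_j, Ẑ) ∈ {−1, 0}, and (iii) B(E_j, Z̃) ∈ {−1, 0, 1}. Then B(Ẑ, Ẑ) = B(Z̃, Z̃). -/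
/-- The key lattice computation: if `Ẑ - Z̃ = ∑ c j • E j` with
`2 * c j = B (E j) Z̃ - B (E j) Ẑ`, `B (E j) Ẑ ∈ {-1, 0}` and
`B (E j) Z̃ ∈ {-1, 0, 1}` for all `j`, then `B Ẑ Ẑ = B Z̃ Z̃`. -/
theorem stmt_2 {M : Type*} [AddCommGroup M] [Module ℤ M]
    (B : M →ₗ[ℤ] M →ₗ[ℤ] ℤ) (hsymm : ∀ x y : M, B x y = B y x)
    (s : ℕ) (E : Fin s → M) (Zhat Ztil : M) (c : Fin s → ℤ)
    (hdiff : Zhat - Ztil = ∑ j, c j • E j)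
    (hc : ∀ j, 2 * c j = B (E j) Ztil - B (E j) Zhat)
    (hZhat : ∀ j, B (E j) Zhat = -1 ∨ B (E j) Zhat = 0)
    (hZtil : ∀ j, B (E j) Ztil = -1 ∨ B (E j) Ztil = 0 ∨ B (E j) Ztil = 1) :
    B Zhat Zhat = B Ztil Ztil := by
  have key : B (Zhat - Ztil) (Zhat + Ztil) = B Zhat Zhat - B Ztil Ztil := by
    simp only [map_sub, map_add, LinearMap.sub_apply, LinearMap.add_apply, hsymm Zhat Ztil]
    ring
  have h2 : B (Zhat - Ztil) (Zhat + Ztil) = 0 := by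
    rw [hdiff, map_sum, LinearMap.sum_apply]
    apply Finset.sum_eq_zero
    intro j _
    have h1 := hc j
    have h2' := hZhat j
    have h3 := hZtil j
    simp only [LinearMap.map_smul_of_tower, LinearMap.smul_apply, map_add, smul_eq_mul]
    rcases h2' with h | h <;> rcases h3 with h' | h' | h' <;> rw [h, h'] at h1 ⊢ <;> omega
  omega
end

section
/- Let M be a ℤ-module equipped with a symmetric ℤ-bilinear form B. Let E_1, …, E_s ∈ M satisfy B(E_j, E_j) = −2 for all j and B(E_j, E_{j'}) = 0 for j ≠ j'. Let W ∈ M, set k_j = B(E_j, W), n_j = ⌈k_j/2⌉, and Ẑ = W + Σ_j n_j E_j. Suppose there exist integers ñ_1, …, ñ_s such that the element Z̃ = W + Σ_j ñ_j E_j satisfies B(E_j, Z̃) ∈ {−1, 0, 1} for all j and B(Z̃, Z̃) = −2. Then B(Ẑ, Ẑ) = −2. -/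
private lemma ceil_helper_stmt3 (a c : ℤ) (hc : c = -1 ∨ c = 0 ∨ c = 1) :
    ⌈((c + 2 * a : ℤ) : ℚ) / 2⌉ = a + (if c = 1 then 1 else 0) := by
  rcases hc with h | h | h <;> subst h <;> norm_num <;>
    · rw [Int.ceil_eq_iff]
      push_cast
      constructor <;> linarith

/-- If `Ẑ = W + ∑ n j • E j` is constructed via the ceiling recipe from
pairwise orthogonal `(-2)`-vectors `E j`, and there exist integers `ñ j`
such that `Z̃ = W + ∑ ñ j • E j` satisfies `B (E j) Z̃ ∈ {-1, 0, 1}` and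
`B Z̃ Z̃ = -2`, then `B Ẑ Ẑ = -2`. -/
theorem stmt_3 {M : Type*} [AddCommGroup M] [Module ℤ M]
    (B : M →ₗ[ℤ] M →ₗ[ℤ] ℤ) (hsymm : ∀ x y : M, B x y = B y x)
    (s : ℕ) (E : Fin s → M)
    (hdiag : ∀ j, B (E j) (E j) = -2)
    (horth : ∀ j j', j ≠ j' → B (E j) (E j') = 0)
    (W : M) (k : Fin s → ℤ) (hk : ∀ j, k j = B (E j) W)
    (n : Fin s → ℤ) (hn : ∀ j, n j = ⌈(k j : ℚ) / 2⌉)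
    (Zhat : M) (hZhat : Zhat = W + ∑ j, n j • E j)
    (ntil : Fin s → ℤ) (Ztil : M) (hZtil : Ztil = W + ∑ j, ntil j • E j)
    (hbd : ∀ j, B (E j) Ztil = -1 ∨ B (E j) Ztil = 0 ∨ B (E j) Ztil = 1)
    (hsq : B Ztil Ztil = -2) :
    B Zhat Zhat = -2 := by
  set c : Fin s → ℤ := fun j => B (E j) Ztil with hc
  set d : Fin s → ℤ := fun j => n j - ntil j with hdd
  have hBEsum : ∀ (j : Fin s) (m : Fin s → ℤ),
      B (E j) (∑ i, m i • E i) = -2 * m j := by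
    intro j m
    rw [map_sum, Finset.sum_eq_single j]
    · rw [map_zsmul, hdiag j]; simp; ring
    · intro i _ hij
      rw [map_zsmul, horth j i (fun h => hij h.symm)]; simp
    · intro h; exact absurd (Finset.mem_univ j) h
  have hcval : ∀ j, c j = k j - 2 * ntil j := by
    intro j
    show B (E j) Ztil = _
    rw [hZtil, map_add, hBEsum, hk]; ring
  have hd : ∀ j, n j = ntil j + (if c j = 1 then 1 else 0) := by
    intro j
    have hkj : k j = c j + 2 * ntil j := by rw [hcval j]; ring
    rw [hn j, hkj, ceil_helper_stmt3 (ntil j) (c j) (hbd j)]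
  have hZZ : Zhat = Ztil + ∑ j, d j • E j := by
    rw [hZhat, hZtil, add_assoc, ← Finset.sum_add_distrib]
    congr 1
    refine Finset.sum_congr rfl fun j _ => ?_
    have hj : ntil j + d j = n j := by simp [hdd]
    rw [← hj, add_zsmul]
  have hBZY : B Ztil (∑ j, d j • E j) = ∑ j, d j * c j := by
    rw [map_sum]
    refine Finset.sum_congr rfl fun j _ => ?_
    rw [map_zsmul, hsymm Ztil (E j)]
    simp [hc]
  have hBYZ : B (∑ j, d j • E j) Ztil = ∑ j, d j * c j := by
    rw [hsymm, hBZY]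
  have hBYY : B (∑ j, d j • E j) (∑ j, d j • E j)
      = ∑ j, d j * (-2 * d j) := by
    rw [map_sum]
    refine Finset.sum_congr rfl fun j _ => ?_
    rw [map_zsmul, hsymm _ (E j), hBEsum j]
    simp only [smul_eq_mul]
  rw [hZZ]
  rw [show (B (Ztil + ∑ j, d j • E j)) (Ztil + ∑ j, d j • E j)
      = B Ztil Ztil + B Ztil (∑ j, d j • E j) + (B (∑ j, d j • E j) Ztil
        + B (∑ j, d j • E j) (∑ j, d j • E j)) by
    rw [map_add]; simp only [LinearMap.add_apply, map_add]; ring]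
  rw [hsq, hBZY, hBYZ, hBYY]
  have hzero : ∀ j, d j * c j + (d j * c j + d j * (-2 * d j)) = 0 := by
    intro j
    have h1 := hd j
    have h2 : d j = n j - ntil j := rfl
    rcases hbd j with h | h | h
    · replace h : c j = -1 := h
      have h3 : d j = 0 := by rw [h] at h1; norm_num at h1; omega
      rw [h3]; ring
    · replace h : c j = 0 := h
      have h3 : d j = 0 := by rw [h] at h1; norm_num at h1; omega
      rw [h3]; ring
    · replace h : c j = 1 := h
      have h3 : d j = 1 := by rw [h] at h1; norm_num at h1; omega
      rw [h3, h]; ring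
  have hsum : (∑ j, d j * c j) + ((∑ j, d j * c j) + ∑ j, d j * (-2 * d j)) = 0 := by
    rw [← Finset.sum_add_distrib, ← Finset.sum_add_distrib]
    exact Finset.sum_eq_zero fun j _ => hzero j
  linarith [hsum]
end
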